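/- arXiv:2309.09956 — 2 statements merged into one kernel-verified Lean document; each statement's English description precedes it below -/
import Mathlib

section
/- If a graph G of order n is k-vertex-minor universal, then 3^{n-k} ≥ 2^{(k²-5k)/2 - 1}, and consequently k < √(2n·log₂3) + 2. -/
/-- Local complementation of `G` at vertex `v`. -/
def localComplement {V : Type*} (G : SimpleGraph V) (v : V) : SimpleGraph V where
  Adj a b :=
    (G.Adj v a ∧ G.Adj v b ∧ a ≠ b ∧ ¬ G.Adj a b) ∨ (¬(G.Adj v a ∧ G.Adj v b) ∧ G.Adj a b)
  symm := by
    constructor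
    intro a b h
    cases h with
    | inl h => exact Or.inl ⟨h.2.1, h.1, Ne.symm h.2.2.1, fun hba => h.2.2.2 hba.symm⟩
    | inr h => exact Or.inr ⟨fun hc => h.1 ⟨hc.2, hc.1⟩, h.2.symm⟩
  loopless := by
    constructor
    intro a h
    cases h with
    | inl h => exact h.2.2.1 rfl
    | inr h => exact G.irrefl h.2

/-- `G` is `k`-vertex-minor universal: every graph on every `k`-element subset `W`
of its vertices is a vertex-minor of `G`, i.e. can be induced on `W` by local
complementations (followed by deletion of the vertices outside `W`). -/
def IsVertexMinorUniversal {V : Type*} (G : SimpleGraph V) (k : ℕ) : Prop :=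
  ∀ W : Finset V, W.card = k → ∀ H : SimpleGraph V,
    (∀ a b, H.Adj a b → a ∈ W ∧ b ∈ W) →
    ∃ l : List V, ∀ a ∈ W, ∀ b ∈ W,
      ((List.foldl localComplement G l).Adj a b ↔ H.Adj a b)


set_option linter.unusedSectionVars false
set_option maxHeartbeats 1000000
section aux
open Matrix
variable {V : Type*} [Fintype V] [DecidableEq V]

abbrev dg (f : V → ZMod 2) : Matrix V V (ZMod 2) := Matrix.diagonal f
def ind (v : V) : V → ZMod 2 := fun u => if u = v then 1 else 0

lemma sandwich (X Y : Matrix V V (ZMod 2)) (v : V) (i j : V) :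
    (X * dg (ind v) * Y) i j = X i v * Y v j := by
  rw [Matrix.mul_apply, Finset.sum_eq_single v]
  · rw [Matrix.mul_diagonal]; simp [ind]
  · intro u _ hu; rw [Matrix.mul_diagonal]; simp [ind, hu]
  · simp

lemma dXd (X : Matrix V V (ZMod 2)) (v : V) (h : X v v = 0) :
    dg (ind v) * X * dg (ind v) = 0 := by
  ext i j
  rw [Matrix.mul_diagonal, Matrix.diagonal_mul]
  by_cases hi : i = v <;> by_cases hj : j = v <;> simp [ind, hi, hj, h]

lemma char2M (X : Matrix V V (ZMod 2)) : X + X = 0 := by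
  ext i j; exact CharTwo.add_self_eq_zero _

lemma self_inv_unit (U : Matrix V V (ZMod 2)) (h : U * U = 1) : IsUnit U :=
  ⟨⟨U, U, h, h⟩, rfl⟩

lemma det2a : ∀ A B C D e : ZMod 2, A*D+B*C=1 → A*(e*B+D)+B*(e*A+C)=1 := by decide

lemma det2b : ∀ A B C D e : ZMod 2, A*D+B*C=1 →
    (A+e*C)*(e*B+D+e*D)+(B+e*D)*(e*A+C+e*C) = 1 := by decide

lemma step0 (Γ : Matrix V V (ZMod 2)) (a b c d : V → ZMod 2)
    (hdet : ∀ u, a u * d u + b u * c u = 1)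
    (hu : IsUnit (dg c * Γ + dg d)) (v : V) :
    ∃ a' b' c' d' : V → ZMod 2, (∀ u, a' u * d' u + b' u * c' u = 1) ∧
      IsUnit (dg c' * Γ + dg d') ∧
      ∀ i j, i ≠ j →
        ((dg a' * Γ + dg b') * (dg c' * Γ + dg d')⁻¹) i j =
          (if i = v ∨ j = v
            then ((dg a * Γ + dg b) * (dg c * Γ + dg d)⁻¹) i j
            else ((dg a * Γ + dg b) * (dg c * Γ + dg d)⁻¹) i j +
              ((dg a * Γ + dg b) * (dg c * Γ + dg d)⁻¹) i v *
              ((dg a * Γ + dg b) * (dg c * Γ + dg d)⁻¹) v j) := by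
  classical
  set M : Matrix V V (ZMod 2) := dg c * Γ + dg d with hM
  set P : Matrix V V (ZMod 2) := dg a * Γ + dg b with hP
  set N : Matrix V V (ZMod 2) := P * M⁻¹ with hN
  have hMdet : IsUnit M.det := (Matrix.isUnit_iff_isUnit_det M).1 hu
  have hMM : M * M⁻¹ = 1 := Matrix.mul_nonsing_inv M hMdet
  have hM'M : M⁻¹ * M = 1 := Matrix.nonsing_inv_mul M hMdet
  have hNM : N * M = P := by rw [hN, mul_assoc, hM'M, mul_one]
  have hDD : dg (ind v) * dg (ind v) = dg (ind v) := by
    have hfun : (fun u => ind v u * ind v u) = ind v := by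
      funext u; simp only [ind]; split <;> simp
    rw [Matrix.diagonal_mul_diagonal, hfun]
  have hvv : N v v = 0 ∨ N v v = 1 := by
    have : ∀ x : ZMod 2, x = 0 ∨ x = 1 := by decide
    exact this _
  rcases hvv with hvv | hvv
  · -- case N v v = 0
    set U : Matrix V V (ZMod 2) := 1 + dg (ind v) * N with hU
    have hXX : dg (ind v) * N * (dg (ind v) * N) = 0 := by
      calc dg (ind v) * N * (dg (ind v) * N) = dg (ind v) * N * dg (ind v) * N := by
            rw [mul_assoc (dg (ind v) * N)]
        _ = 0 := by rw [dXd N v hvv, zero_mul]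
    have hUU : U * U = 1 := by
      have h2 : U * U = 1 + (dg (ind v) * N + dg (ind v) * N)
          + dg (ind v) * N * (dg (ind v) * N) := by
        rw [hU]; noncomm_ring
      rw [h2, char2M, hXX, add_zero, add_zero]
    have hM' : dg (fun u => ind v u * a u + c u) * Γ + dg (fun u => ind v u * b u + d u)
        = U * M := by
      have e1 : dg (fun u => ind v u * a u + c u) = dg (ind v) * dg a + dg c := by
        rw [Matrix.diagonal_mul_diagonal, Matrix.diagonal_add]
      have e2 : dg (fun u => ind v u * b u + d u) = dg (ind v) * dg b + dg d := by
        rw [Matrix.diagonal_mul_diagonal, Matrix.diagonal_add]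
      have e3 : U * M = M + dg (ind v) * P := by
        rw [hU, add_mul, one_mul, mul_assoc, hNM]
      rw [e1, e2, e3, hM, hP]; noncomm_ring
    refine ⟨a, b, fun u => ind v u * a u + c u, fun u => ind v u * b u + d u, ?_, ?_, ?_⟩
    · intro u; exact det2a (a u) (b u) (c u) (d u) (ind v u) (hdet u)
    · rw [hM']; exact (self_inv_unit U hUU).mul hu
    · intro i j hij
      have hinv : (U * M)⁻¹ = M⁻¹ * U := by
        rw [Matrix.mul_inv_rev, Matrix.inv_eq_right_inv hUU]
      have hfull : P * (U * M)⁻¹ = N + N * dg (ind v) * N := by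
        rw [hinv, ← mul_assoc, ← hN, hU, mul_add, mul_one, ← mul_assoc]
      rw [hM', ← hP, hfull]
      by_cases hi : i = v
      · subst hi
        rw [if_pos (Or.inl rfl)]
        simp only [Matrix.add_apply, sandwich, hvv, zero_mul, add_zero]
      · by_cases hj : j = v
        · subst hj
          rw [if_pos (Or.inr rfl)]
          simp only [Matrix.add_apply, sandwich, hvv, mul_zero, add_zero]
        · rw [if_neg (by simp [hi, hj])]
          simp only [Matrix.add_apply, sandwich]
  · -- case N v v = 1
    set U : Matrix V V (ZMod 2) := 1 + dg (ind v) * (N + 1) with hU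
    have hN1vv : (N + 1) v v = 0 := by
      rw [Matrix.add_apply, Matrix.one_apply_eq, hvv]; decide
    have hXX : dg (ind v) * (N + 1) * (dg (ind v) * (N + 1)) = 0 := by
      calc dg (ind v) * (N + 1) * (dg (ind v) * (N + 1))
          = dg (ind v) * (N + 1) * dg (ind v) * (N + 1) := by
            rw [mul_assoc (dg (ind v) * (N + 1))]
        _ = 0 := by rw [dXd (N + 1) v hN1vv, zero_mul]
    have hUU : U * U = 1 := by
      have h2 : U * U = 1 + (dg (ind v) * (N + 1) + dg (ind v) * (N + 1))
          + dg (ind v) * (N + 1) * (dg (ind v) * (N + 1)) := by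
        rw [hU]; noncomm_ring
      rw [h2, char2M, hXX, add_zero, add_zero]
    have hM' : dg (fun u => ind v u * a u + c u + ind v u * c u) * Γ
          + dg (fun u => ind v u * b u + d u + ind v u * d u) = U * M := by
      have e1 : dg (fun u => ind v u * a u + c u + ind v u * c u)
          = dg (ind v) * dg a + dg c + dg (ind v) * dg c := by
        rw [Matrix.diagonal_mul_diagonal, Matrix.diagonal_mul_diagonal,
          Matrix.diagonal_add, Matrix.diagonal_add]
      have e2 : dg (fun u => ind v u * b u + d u + ind v u * d u)
          = dg (ind v) * dg b + dg d + dg (ind v) * dg d := by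
        rw [Matrix.diagonal_mul_diagonal, Matrix.diagonal_mul_diagonal,
          Matrix.diagonal_add, Matrix.diagonal_add]
      have e3 : U * M = M + dg (ind v) * P + dg (ind v) * M := by
        rw [hU]
        have : (1 + dg (ind v) * (N + 1)) * M
            = M + dg (ind v) * (N * M) + dg (ind v) * M := by noncomm_ring
        rw [this, hNM]
      rw [e1, e2, e3, hM, hP]; noncomm_ring
    have hNum : dg (fun u => a u + ind v u * c u) * Γ + dg (fun u => b u + ind v u * d u)
        = (N + dg (ind v)) * M := by
      have e1 : dg (fun u => a u + ind v u * c u) = dg a + dg (ind v) * dg c := by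
        rw [Matrix.diagonal_mul_diagonal, Matrix.diagonal_add]
      have e2 : dg (fun u => b u + ind v u * d u) = dg b + dg (ind v) * dg d := by
        rw [Matrix.diagonal_mul_diagonal, Matrix.diagonal_add]
      have e3 : (N + dg (ind v)) * M = P + dg (ind v) * M := by
        rw [add_mul, hNM]
      rw [e1, e2, e3, hM, hP]; noncomm_ring
    refine ⟨fun u => a u + ind v u * c u, fun u => b u + ind v u * d u,
      fun u => ind v u * a u + c u + ind v u * c u,
      fun u => ind v u * b u + d u + ind v u * d u, ?_, ?_, ?_⟩
    · intro u; exact det2b (a u) (b u) (c u) (d u) (ind v u) (hdet u)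
    · rw [hM']; exact (self_inv_unit U hUU).mul hu
    · intro i j hij
      have hinv : (U * M)⁻¹ = M⁻¹ * U := by
        rw [Matrix.mul_inv_rev, Matrix.inv_eq_right_inv hUU]
      have hfull : (N + dg (ind v)) * M * (U * M)⁻¹
          = N + N * dg (ind v) * N + (N * dg (ind v) + dg (ind v) * N) := by
        rw [hinv]
        have h4 : (N + dg (ind v)) * M * (M⁻¹ * U) = (N + dg (ind v)) * U := by
          rw [mul_assoc, ← mul_assoc M, hMM, one_mul]
        rw [h4, hU]
        have h5 : dg (ind v) * (dg (ind v) * (N + 1)) = dg (ind v) * (N + 1) := by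
          rw [← mul_assoc, hDD]
        have h6 : (N + dg (ind v)) * (1 + dg (ind v) * (N + 1))
            = N + N * (dg (ind v) * (N + 1)) + (dg (ind v)
              + dg (ind v) * (dg (ind v) * (N + 1))) := by noncomm_ring
        rw [h6, h5]
        have h7 : dg (ind v) + dg (ind v) * (N + 1) = dg (ind v) * N := by
          rw [mul_add, mul_one, add_comm (dg (ind v) * N), ← add_assoc, char2M, zero_add]
        rw [h7]
        have h8 : N * (dg (ind v) * (N + 1)) = N * dg (ind v) * N + N * dg (ind v) := by
          rw [← mul_assoc]; noncomm_ring
        rw [h8]; noncomm_ring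
      rw [hNum, hM', hfull]
      have hval : ∀ x : ZMod 2, x + x + x = x := by decide
      by_cases hi : i = v
      · subst hi
        rw [if_pos (Or.inl rfl)]
        simp only [Matrix.add_apply, sandwich, Matrix.mul_diagonal, Matrix.diagonal_mul,
          hvv, one_mul, ind, if_pos rfl, if_neg (Ne.symm hij), if_true, mul_zero, zero_mul,
          mul_one, add_zero, zero_add]
        exact hval _
      · by_cases hj : j = v
        · subst hj
          rw [if_pos (Or.inr rfl)]
          simp only [Matrix.add_apply, sandwich, Matrix.mul_diagonal, Matrix.diagonal_mul,
            hvv, mul_one, one_mul, ind, if_pos rfl, if_neg hij, if_true, mul_zero, zero_mul,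
            add_zero, zero_add]
          exact hval _
        · rw [if_neg (by simp [hi, hj])]
          simp only [Matrix.add_apply, sandwich, Matrix.mul_diagonal, Matrix.diagonal_mul,
            ind, if_neg hi, if_neg hj, mul_zero, zero_mul, add_zero]
open Classical in
noncomputable def gmat (H : SimpleGraph V) : Matrix V V (ZMod 2) :=
  Matrix.of fun i j => if H.Adj i j then 1 else 0

lemma lc_adj (H : SimpleGraph V) (v a b : V) : (localComplement H v).Adj a b ↔
    ((H.Adj v a ∧ H.Adj v b ∧ a ≠ b ∧ ¬ H.Adj a b) ∨
      (¬(H.Adj v a ∧ H.Adj v b) ∧ H.Adj a b)) := Iff.rfl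

lemma toggle_val (p q r p' : Prop) [Decidable p] [Decidable q] [Decidable r] [Decidable p']
    (hpp : p ↔ p') (t : Prop) [Decidable t] (ht : t) :
    (if (p ∧ q ∧ t ∧ ¬r) ∨ (¬(p ∧ q) ∧ r) then (1 : ZMod 2) else 0)
      = (if r then 1 else 0) + (if p' then 1 else 0) * (if q then 1 else 0) := by
  by_cases hp : p <;> by_cases hq : q <;> by_cases hr : r <;>
    simp_all [← hpp] <;> first | rfl | decide

lemma gmat_lc (H : SimpleGraph V) (v i j : V) (hij : i ≠ j) :
    gmat (localComplement H v) i j =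
      if i = v ∨ j = v then gmat H i j
      else gmat H i j + gmat H i v * gmat H v j := by
  classical
  simp only [gmat, Matrix.of_apply]
  by_cases hi : i = v
  · subst hi
    rw [if_pos (Or.inl rfl)]
    refine if_congr ?_ rfl rfl
    rw [lc_adj]
    constructor
    · rintro (⟨hvv, _⟩ | ⟨_, h⟩)
      · exact absurd hvv (H.irrefl)
      · exact h
    · intro h
      exact Or.inr ⟨fun hc => H.irrefl hc.1, h⟩
  · by_cases hj : j = v
    · subst hj
      rw [if_pos (Or.inr rfl)]
      refine if_congr ?_ rfl rfl
      rw [lc_adj]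
      constructor
      · rintro (⟨_, hvv, _⟩ | ⟨_, h⟩)
        · exact absurd hvv (H.irrefl)
        · exact h
      · intro h
        exact Or.inr ⟨fun hc => H.irrefl hc.2, h⟩
    · rw [if_neg (show ¬(i = v ∨ j = v) from by simp [hi, hj])]
      exact (if_congr (lc_adj H v i j) rfl rfl).trans
        (toggle_val (H.Adj v i) (H.Adj v j) (H.Adj i j) (H.Adj i v) (H.adj_comm v i)
          (i ≠ j) hij)

lemma sound (G : SimpleGraph V) (l : List V) :
    ∃ a b c d : V → ZMod 2, (∀ u, a u * d u + b u * c u = 1) ∧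
      IsUnit (dg c * gmat G + dg d) ∧
      ∀ i j, i ≠ j → gmat (List.foldl localComplement G l) i j
        = ((dg a * gmat G + dg b) * (dg c * gmat G + dg d)⁻¹) i j := by
  classical
  induction l using List.reverseRecOn with
  | nil =>
    refine ⟨fun _ => 1, fun _ => 0, fun _ => 0, fun _ => 1, by simp, ?_, ?_⟩
    · have h0 : dg (fun _ : V => (0 : ZMod 2)) = 0 := Matrix.diagonal_zero
      have h1 : dg (fun _ : V => (1 : ZMod 2)) = 1 := Matrix.diagonal_one
      rw [h0, h1, zero_mul, zero_add]
      exact isUnit_one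
    · intro i j hij
      have h0 : dg (fun _ : V => (0 : ZMod 2)) = 0 := Matrix.diagonal_zero
      have h1 : dg (fun _ : V => (1 : ZMod 2)) = 1 := Matrix.diagonal_one
      have hi1 : (1 : Matrix V V (ZMod 2))⁻¹ = 1 := Matrix.inv_eq_right_inv (mul_one 1)
      rw [h0, h1, zero_mul, zero_add, one_mul, add_zero, hi1, mul_one]
      rfl
  | append_singleton l v ih =>
    obtain ⟨a, b, c, d, hdet, hu, hval⟩ := ih
    obtain ⟨a', b', c', d', hdet', hu', hval'⟩ := step0 (gmat G) a b c d hdet hu v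
    refine ⟨a', b', c', d', hdet', hu', ?_⟩
    intro i j hij
    rw [List.foldl_append, List.foldl_cons, List.foldl_nil, gmat_lc _ v i j hij,
      hval' i j hij]
    by_cases hc : i = v ∨ j = v
    · rw [if_pos hc, if_pos hc]
      exact hval i j hij
    · push_neg at hc
      rw [if_neg (by simp [hc.1, hc.2]), if_neg (by simp [hc.1, hc.2])]
      rw [hval i j hij, hval i v hc.1, hval v j (fun hvj => hc.2 hvj.symm)]


lemma lift_indep (Γ : Matrix V V (ZMod 2)) (a b a' b' c d : V → ZMod 2)
    (h1 : ∀ u, a u * d u + b u * c u = 1) (h2 : ∀ u, a' u * d u + b' u * c u = 1)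
    (hu : IsUnit (dg c * Γ + dg d)) :
    ∀ i j, i ≠ j → ((dg a * Γ + dg b) * (dg c * Γ + dg d)⁻¹) i j
      = ((dg a' * Γ + dg b') * (dg c * Γ + dg d)⁻¹) i j := by
  classical
  intro i j hij
  set δ : V → ZMod 2 := fun u => if c u = 1 then a u + a' u else b u + b' u with hδ
  have hkey : ∀ A B A' B' C D : ZMod 2, A*D+B*C = 1 → A'*D+B'*C = 1 →
      (A' = A + (if C = 1 then A + A' else B + B') * C ∧
        B' = B + (if C = 1 then A + A' else B + B') * D) := by decide
  have ha : a' = fun u => a u + δ u * c u := by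
    funext u; exact (hkey (a u) (b u) (a' u) (b' u) (c u) (d u) (h1 u) (h2 u)).1
  have hb : b' = fun u => b u + δ u * d u := by
    funext u; exact (hkey (a u) (b u) (a' u) (b' u) (c u) (d u) (h1 u) (h2 u)).2
  have ea : dg a' = dg a + dg δ * dg c := by
    rw [Matrix.diagonal_mul_diagonal, Matrix.diagonal_add, ha]
  have eb : dg b' = dg b + dg δ * dg d := by
    rw [Matrix.diagonal_mul_diagonal, Matrix.diagonal_add, hb]
  have hMdet : IsUnit (dg c * Γ + dg d).det := (Matrix.isUnit_iff_isUnit_det _).1 hu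
  have hMM : (dg c * Γ + dg d) * (dg c * Γ + dg d)⁻¹ = 1 := Matrix.mul_nonsing_inv _ hMdet
  have e2 : (dg a' * Γ + dg b') * (dg c * Γ + dg d)⁻¹
      = (dg a * Γ + dg b) * (dg c * Γ + dg d)⁻¹ + dg δ := by
    have e3 : dg a' * Γ + dg b' = (dg a * Γ + dg b) + dg δ * (dg c * Γ + dg d) := by
      rw [ea, eb]; noncomm_ring
    rw [e3, add_mul, mul_assoc, hMM, mul_one]
  rw [e2, Matrix.add_apply]
  have hd0 : dg δ i j = 0 := Matrix.diagonal_apply_ne δ hij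
  rw [hd0, add_zero]

def ctop (p : ZMod 2 × ZMod 2) : ZMod 2 × ZMod 2 :=
  if p.1 = 0 then (1, 0) else if p.2 = 0 then (0, 1) else (1, 0)

lemma ctop_det : ∀ p : ZMod 2 × ZMod 2, p ≠ (0, 0) →
    (ctop p).1 * p.2 + (ctop p).2 * p.1 = 1 := by decide

noncomputable def Phi (G : SimpleGraph V) (p : V → ZMod 2 × ZMod 2) :
    Matrix V V (ZMod 2) :=
  Matrix.of fun i j => if i = j then 0 else
    ((dg (fun u => (ctop (p u)).1) * gmat G + dg (fun u => (ctop (p u)).2)) *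
      (dg (fun u => (p u).1) * gmat G + dg (fun u => (p u).2))⁻¹) i j

lemma reach (G : SimpleGraph V) (l : List V) :
    ∃ p : V → ZMod 2 × ZMod 2, (∀ u, p u ≠ (0, 0)) ∧
      gmat (List.foldl localComplement G l) = Phi G p := by
  classical
  obtain ⟨a, b, c, d, hdet, hu, hval⟩ := sound G l
  have hnz : ∀ u, ((c u, d u) : ZMod 2 × ZMod 2) ≠ (0, 0) := by
    intro u hzero
    have h0 : ∀ A B C D : ZMod 2, C = 0 → D = 0 → A * D + B * C = 1 → False := by decide
    rw [Prod.mk.injEq] at hzero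
    exact h0 (a u) (b u) (c u) (d u) hzero.1 hzero.2 (hdet u)
  refine ⟨fun u => (c u, d u), hnz, ?_⟩
  ext i j
  by_cases hij : i = j
  · subst hij
    simp [gmat, Phi, SimpleGraph.irrefl]
  · rw [Phi, Matrix.of_apply, if_neg hij, hval i j hij]
    exact lift_indep (gmat G) a b _ _ c d hdet
      (fun u => ctop_det (c u, d u) (hnz u)) hu i j hij

lemma gmat_adj_iff {X Y : SimpleGraph V} (hxy : gmat X = gmat Y) (a b : V) :
    X.Adj a b ↔ Y.Adj a b := by
  classical
  have h2 := congrFun (congrFun hxy a) b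
  simp only [gmat, Matrix.of_apply] at h2
  by_cases hx : X.Adj a b <;> by_cases hy : Y.Adj a b <;> simp_all

def pgraph {k : ℕ} (f : Fin k → V) (hf : Function.Injective f)
    (g : {P : Fin k × Fin k // P.1 < P.2} → Bool) : SimpleGraph V where
  Adj x y := ∃ P : {P : Fin k × Fin k // P.1 < P.2}, g P = true ∧
    ((x = f P.1.1 ∧ y = f P.1.2) ∨ (x = f P.1.2 ∧ y = f P.1.1))
  symm := by
    constructor
    rintro x y ⟨P, hg, (⟨hx, hy⟩ | ⟨hx, hy⟩)⟩
    · exact ⟨P, hg, Or.inr ⟨hy, hx⟩⟩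
    · exact ⟨P, hg, Or.inl ⟨hy, hx⟩⟩
  loopless := by
    constructor
    rintro x ⟨P, hg, (⟨hx, hy⟩ | ⟨hx, hy⟩)⟩
    · exact absurd (hf (hx.symm.trans hy)) (ne_of_lt P.2)
    · exact absurd (hf (hx.symm.trans hy).symm) (ne_of_lt P.2)

lemma pgraph_adj {k : ℕ} (f : Fin k → V) (hf : Function.Injective f)
    (g : {P : Fin k × Fin k // P.1 < P.2} → Bool)
    (P : {P : Fin k × Fin k // P.1 < P.2}) :
    (pgraph f hf g).Adj (f P.1.1) (f P.1.2) ↔ g P = true := by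
  constructor
  · rintro ⟨Q, hg, (⟨hx, hy⟩ | ⟨hx, hy⟩)⟩
    · have h1 : P.1.1 = Q.1.1 := hf hx
      have h2 : P.1.2 = Q.1.2 := hf hy
      have : P = Q := Subtype.ext (Prod.ext h1 h2)
      rwa [this]
    · have h1 : P.1.1 = Q.1.2 := hf hx
      have h2 : P.1.2 = Q.1.1 := hf hy
      exact absurd (h1 ▸ h2 ▸ P.2) (lt_asymm Q.2)
  · intro hg
    exact ⟨P, hg, Or.inl ⟨rfl, rfl⟩⟩

lemma two_mul_card_lt (k : ℕ) :
    2 * Fintype.card {P : Fin k × Fin k // P.1 < P.2} = k * k - k := by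
  have e : {P : Fin k × Fin k // P.1 < P.2} ≃ Σ j : Fin k, Fin j.1 :=
    { toFun := fun P => ⟨P.1.2, ⟨P.1.1.1, P.2⟩⟩
      invFun := fun s => ⟨(⟨s.2.1, lt_trans s.2.2 s.1.2⟩, s.1), s.2.2⟩
      left_inv := fun _ => rfl
      right_inv := fun _ => rfl }
  rw [Fintype.card_congr e, Fintype.card_sigma]
  simp only [Fintype.card_fin]
  rw [Fin.sum_univ_eq_sum_range (fun i => i) k]
  rw [mul_comm, Finset.sum_range_id_mul_two]
  cases k with
  | zero => rfl
  | succ t =>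
    rw [Nat.add_sub_cancel, Nat.mul_succ]
    exact (Nat.add_sub_cancel ..).symm

lemma card_S3 : Fintype.card {x : ZMod 2 × ZMod 2 // x ≠ (0, 0)} = 3 := by decide


lemma main_count {k : ℕ} (G : SimpleGraph V) (hkn : k ≤ Fintype.card V)
    (h : IsVertexMinorUniversal G k) :
    2 ^ Fintype.card {P : Fin k × Fin k // P.1 < P.2} ≤ 3 ^ Fintype.card V := by
  classical
  obtain ⟨W, -, hWcard⟩ := Finset.exists_subset_card_eq
    (s := (Finset.univ : Finset V)) (n := k) (by simpa using hkn)
  set f : Fin k → V := fun i => (W.equivFin.symm (Fin.cast hWcard.symm i)).1 with hfdef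
  have hfW : ∀ i, f i ∈ W := fun i => (W.equivFin.symm _).2
  have hfinj : Function.Injective f := by
    intro i j hij
    have h1 : W.equivFin.symm (Fin.cast hWcard.symm i)
        = W.equivFin.symm (Fin.cast hWcard.symm j) := Subtype.ext hij
    have h2 := W.equivFin.symm.injective h1
    exact Fin.ext (by simpa using congrArg Fin.val h2)
  have hch : ∀ g : {P : Fin k × Fin k // P.1 < P.2} → Bool, ∃ l : List V,
      ∀ a ∈ W, ∀ b ∈ W,
      ((List.foldl localComplement G l).Adj a b ↔ (pgraph f hfinj g).Adj a b) := by
    intro g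
    apply h W hWcard (pgraph f hfinj g)
    rintro a b ⟨P, hg, (⟨ha, hb⟩ | ⟨ha, hb⟩)⟩ <;>
      exact ⟨by rw [ha]; exact hfW _, by rw [hb]; exact hfW _⟩
  have hL := fun g => (hch g).choose_spec
  set ψ : ({P : Fin k × Fin k // P.1 < P.2} → Bool) → Matrix V V (ZMod 2) :=
    fun g => gmat (List.foldl localComplement G (hch g).choose) with hψ
  set Φ' : (V → {x : ZMod 2 × ZMod 2 // x ≠ (0, 0)}) → Matrix V V (ZMod 2) :=
    fun q => Phi G (fun u => ((q u) : ZMod 2 × ZMod 2)) with hΦ'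
  have hmem : ∀ g, ψ g ∈ Finset.image Φ' Finset.univ := by
    intro g
    obtain ⟨p, hnz, hp⟩ := reach G (hch g).choose
    exact Finset.mem_image.2 ⟨fun u => ⟨p u, hnz u⟩, Finset.mem_univ _, hp.symm⟩
  have hinj : Set.InjOn ψ ↑(Finset.univ : Finset ({P : Fin k × Fin k // P.1 < P.2} → Bool)) := by
    intro g1 _ g2 _ hgg
    funext P
    have hadj := gmat_adj_iff hgg (f P.1.1) (f P.1.2)
    have e1 := hL g1 (f P.1.1) (hfW _) (f P.1.2) (hfW _)
    have e2 := hL g2 (f P.1.1) (hfW _) (f P.1.2) (hfW _)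
    have hiff : (g1 P = true) ↔ (g2 P = true) := by
      rw [← pgraph_adj f hfinj g1 P, ← pgraph_adj f hfinj g2 P, ← e1, ← e2]
      exact hadj
    cases hg1 : g1 P <;> cases hg2 : g2 P <;> simp_all
  calc 2 ^ Fintype.card {P : Fin k × Fin k // P.1 < P.2}
      = Fintype.card ({P : Fin k × Fin k // P.1 < P.2} → Bool) := by
        rw [Fintype.card_fun, Fintype.card_bool]
    _ = (Finset.univ : Finset ({P : Fin k × Fin k // P.1 < P.2} → Bool)).card :=
        (Finset.card_univ).symm
    _ ≤ (Finset.image Φ' Finset.univ).card :=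
        Finset.card_le_card_of_injOn ψ (fun g _ => hmem g) hinj
    _ ≤ (Finset.univ : Finset (V → {x : ZMod 2 × ZMod 2 // x ≠ (0, 0)})).card :=
        Finset.card_image_le
    _ = Fintype.card (V → {x : ZMod 2 × ZMod 2 // x ≠ (0, 0)}) := Finset.card_univ
    _ = 3 ^ Fintype.card V := by rw [Fintype.card_fun, card_S3]

end aux

/-- If a graph of order `n` is `k`-vertex-minor universal, then
`3^(n-k) ≥ 2^((k²-5k)/2 - 1)`, and consequently `k < √(2n·log₂3) + 2`. -/
theorem stmt_14 {V : Type*} [Fintype V] (n k : ℕ) (hn : Fintype.card V = n)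
    (hkn : k ≤ n) (G : SimpleGraph V) (h : IsVertexMinorUniversal G k) :
    (2 : ℝ) ^ (((k : ℝ) ^ 2 - 5 * k) / 2 - 1) ≤ (3 : ℝ) ^ ((n : ℝ) - k) ∧
      (k : ℝ) < Real.sqrt (2 * n * Real.logb 2 3) + 2 := by
  classical
  have hm : 2 ^ Fintype.card {P : Fin k × Fin k // P.1 < P.2} ≤ 3 ^ n := by
    have hmc := main_count G (k := k) (by rw [hn]; exact hkn) h
    rwa [hn] at hmc
  set m := Fintype.card {P : Fin k × Fin k // P.1 < P.2} with hmdef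
  have h2m : 2 * m = k * k - k := two_mul_card_lt k
  have hkk : k ≤ k * k := by
    cases k with
    | zero => simp
    | succ t => exact Nat.le_mul_of_pos_left _ (Nat.succ_pos t)
  have hmr : 2 * (m : ℝ) = (k : ℝ) * k - k := by
    have hc := congrArg (Nat.cast (R := ℝ)) h2m
    rw [Nat.cast_sub hkk] at hc
    push_cast at hc
    linarith
  have hbase : (2 : ℝ) ^ (m : ℝ) ≤ (3 : ℝ) ^ (n : ℝ) := by
    rw [Real.rpow_natCast, Real.rpow_natCast]
    exact_mod_cast hm
  have h34 : (3 : ℝ) ^ ((k : ℝ)) ≤ (2 : ℝ) ^ (2 * (k : ℝ) + 1) := by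
    have h4 : (3 : ℝ) ^ (k : ℕ) ≤ (4 : ℝ) ^ (k : ℕ) :=
      pow_le_pow_left₀ (by norm_num) (by norm_num) k
    have e4 : ((4 : ℝ)) ^ (k : ℕ) = (2 : ℝ) ^ (2 * (k : ℝ)) := by
      rw [show (4 : ℝ) = 2 ^ (2 : ℕ) by norm_num, ← pow_mul, ← Real.rpow_natCast]
      push_cast
      ring_nf
    calc (3 : ℝ) ^ ((k : ℝ)) = (3 : ℝ) ^ (k : ℕ) := Real.rpow_natCast 3 k
      _ ≤ (4 : ℝ) ^ (k : ℕ) := h4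
      _ = (2 : ℝ) ^ (2 * (k : ℝ)) := e4
      _ ≤ (2 : ℝ) ^ (2 * (k : ℝ) + 1) :=
          Real.rpow_le_rpow_of_exponent_le (by norm_num) (by linarith)
  have part1 : (2 : ℝ) ^ (((k : ℝ) ^ 2 - 5 * k) / 2 - 1) ≤ (3 : ℝ) ^ ((n : ℝ) - k) := by
    have hexp : ((k : ℝ) ^ 2 - 5 * k) / 2 - 1 = (m : ℝ) - (2 * (k : ℝ) + 1) := by
      have hm2 : (m : ℝ) = ((k : ℝ) * k - k) / 2 := by linarith
      rw [hm2]; ring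
    rw [hexp, Real.rpow_sub (by norm_num), Real.rpow_sub (by norm_num)]
    exact div_le_div₀ (by positivity) hbase (by positivity) h34
  refine ⟨part1, ?_⟩
  have hL32 : (3 : ℝ) / 2 < Real.logb 2 3 := by
    rw [Real.lt_logb_iff_rpow_lt (by norm_num) (by norm_num)]
    have hsq : ((2 : ℝ) ^ ((3 : ℝ) / 2)) ^ (2 : ℕ) = 8 := by
      rw [← Real.rpow_natCast ((2 : ℝ) ^ ((3 : ℝ) / 2)) 2,
        ← Real.rpow_mul (by norm_num)]
      have e32 : (3 : ℝ) / 2 * ((2 : ℕ) : ℝ) = ((3 : ℕ) : ℝ) := by push_cast; ring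
      rw [e32, Real.rpow_natCast]
      norm_num
    refine lt_of_pow_lt_pow_left₀ 2 (by norm_num) ?_
    rw [hsq]; norm_num
  have hlog : ((k : ℝ) ^ 2 - 5 * k) / 2 - 1 ≤ ((n : ℝ) - k) * Real.logb 2 3 := by
    have h1 := Real.logb_le_logb_of_le (by norm_num : (1 : ℝ) < 2) (by positivity) part1
    rw [Real.logb_rpow (by norm_num) (by norm_num)] at h1
    have h2 : Real.logb 2 ((3 : ℝ) ^ ((n : ℝ) - k)) = ((n : ℝ) - k) * Real.logb 2 3 := by
      rw [Real.logb, Real.logb, Real.log_rpow (by norm_num)]; ring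
    rwa [h2] at h1
  by_cases hk2 : k ≤ 2
  · have hs := Real.sqrt_nonneg (2 * (n : ℝ) * Real.logb 2 3)
    rcases Nat.lt_or_ge k 2 with hk | hk
    · have hk1 : (k : ℝ) ≤ 1 := by exact_mod_cast Nat.lt_succ_iff.mp hk
      linarith
    · have hk2' : k = 2 := le_antisymm hk2 hk
      subst hk2'
      have hn2 : (2 : ℝ) ≤ (n : ℝ) := by exact_mod_cast hkn
      have hpos : 0 < 2 * (n : ℝ) * Real.logb 2 3 := by
        have hLpos : (0 : ℝ) < Real.logb 2 3 := by linarith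
        have : (0 : ℝ) < 2 * (n : ℝ) := by linarith
        exact mul_pos this hLpos
      have hsp := Real.sqrt_pos.2 hpos
      push_cast
      linarith
  · push_neg at hk2
    have hk3 : (3 : ℝ) ≤ (k : ℝ) := by exact_mod_cast hk2
    have hQ : ((k : ℝ) - 2) ^ 2 < 2 * (n : ℝ) * Real.logb 2 3 := by
      nlinarith [hlog, hL32, hk3,
        mul_lt_mul_of_pos_left hL32 (by linarith : (0 : ℝ) < 2 * (k : ℝ))]
    have hle : (k : ℝ) - 2 < Real.sqrt (2 * (n : ℝ) * Real.logb 2 3) :=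
      (Real.lt_sqrt (by linarith)).2 hQ
    linarith
end

section
/- If a graph G is k-vertex-minor universal, then k < δ_loc(G) + 2, where δ_loc(G) is the local minimum degree of G. -/
/-- The local minimum degree of `G`: the minimum vertex degree over all graphs
obtainable from `G` by sequences of local complementations. -/
noncomputable def localMinDegree {V : Type*} (G : SimpleGraph V) : ℕ :=
  sInf {d : ℕ | ∃ (l : List V) (v : V),
    ((List.foldl localComplement G l).neighborSet v).ncard = d}


section Aux

open Classical Finset

variable {V : Type*}

lemma localComplement_adj (G : SimpleGraph V) (v a b : V) :
    (localComplement G v).Adj a b ↔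
      (G.Adj v a ∧ G.Adj v b ∧ a ≠ b ∧ ¬ G.Adj a b) ∨ (¬(G.Adj v a ∧ G.Adj v b) ∧ G.Adj a b) :=
  Iff.rfl

lemma localComplement_invol (G : SimpleGraph V) (v : V) :
    localComplement (localComplement G v) v = G := by
  ext a b
  have hva : (localComplement G v).Adj v a ↔ G.Adj v a := by
    rw [localComplement_adj]
    constructor
    · rintro (⟨h, _⟩ | ⟨_, h⟩) <;> [exact absurd h (G.irrefl); exact h]
    · intro h
      exact Or.inr ⟨fun hc => G.irrefl hc.1, h⟩
  have hvb : (localComplement G v).Adj v b ↔ G.Adj v b := by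
    rw [localComplement_adj]
    constructor
    · rintro (⟨h, _⟩ | ⟨_, h⟩) <;> [exact absurd h (G.irrefl); exact h]
    · intro h
      exact Or.inr ⟨fun hc => G.irrefl hc.1, h⟩
  rw [localComplement_adj, hva, hvb, localComplement_adj]
  by_cases h1 : G.Adj v a <;> by_cases h2 : G.Adj v b <;> by_cases h3 : a = b <;>
    by_cases h4 : G.Adj a b <;> simp_all [G.irrefl]

noncomputable def chi (G : SimpleGraph V) (a b : V) : ZMod 2 :=
  if G.Adj a b then 1 else 0

lemma chi_symm (G : SimpleGraph V) (a b : V) : chi G a b = chi G b a := by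
  simp [chi, G.adj_comm]

lemma chi_self (G : SimpleGraph V) (a : V) : chi G a a = 0 := by
  simp [chi, G.irrefl]

lemma chi_lc (G : SimpleGraph V) (v w x : V) :
    chi (localComplement G v) w x
      = chi G w x + chi G v w * chi G v x + chi G v w * (if x = w then 1 else 0) := by
  by_cases hxw : x = w
  · subst hxw
    rw [chi_self, chi_self, if_pos rfl]
    by_cases h : G.Adj v x <;> simp [chi, h] <;> decide
  · rw [if_neg hxw, mul_zero, add_zero]
    have hne : w ≠ x := fun e => hxw e.symm
    by_cases h1 : G.Adj v w <;> by_cases h2 : G.Adj v x <;> by_cases h4 : G.Adj w x <;>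
      simp [chi, localComplement_adj, h1, h2, h4, hne] <;> decide

noncomputable def Fpar (G : SimpleGraph V) (w : V) (D : Finset V) : ZMod 2 :=
  ∑ x ∈ D, chi G w x

lemma Fpar_lc (G : SimpleGraph V) (v w : V) (D : Finset V) :
    Fpar (localComplement G v) w D
      = Fpar G w D + chi G v w * (Fpar G v D + if w ∈ D then 1 else 0) := by
  unfold Fpar
  calc ∑ x ∈ D, chi (localComplement G v) w x
      = ∑ x ∈ D, (chi G w x + chi G v w * chi G v x + chi G v w * (if x = w then 1 else 0)) :=
        Finset.sum_congr rfl fun x _ => chi_lc G v w x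
    _ = _ := by
        rw [Finset.sum_add_distrib, Finset.sum_add_distrib, ← Finset.mul_sum, ← Finset.mul_sum,
          Finset.sum_ite_eq' D w (fun _ => (1 : ZMod 2))]
        by_cases hw : w ∈ D <;> simp [hw] <;> ring

def IsLoc (G : SimpleGraph V) (L : Finset V) : Prop :=
  ∃ D : Finset V, D.Nonempty ∧ D ⊆ L ∧ ∀ w, (w ∈ L ↔ w ∈ D ∨ Fpar G w D = 1)

lemma chi_lc_right (G : SimpleGraph V) (v w : V) :
    chi (localComplement G v) w v = chi G w v := by
  rw [chi_lc]
  by_cases h : v = w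
  · subst h; simp [chi_self]
  · simp [chi_self, h]

lemma zmod2_cases : ∀ x : ZMod 2, x = 0 ∨ x = 1 := by decide

lemma IsLoc_lc (G : SimpleGraph V) (v : V) (L : Finset V) (h : IsLoc G L) :
    IsLoc (localComplement G v) L := by
  classical
  obtain ⟨D, hne, hDL, hiff⟩ := h
  rcases zmod2_cases (Fpar G v D) with hc | hc
  · refine ⟨D, hne, hDL, fun w => ?_⟩
    rw [Fpar_lc, hc, zero_add]
    by_cases hw : w ∈ D
    · simp [hw, hDL hw]
    · rw [if_neg hw, mul_zero, add_zero]
      simpa [hw] using hiff w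
  · -- Fpar G v D = 1
    have hvL : v ∈ L := (hiff v).mpr (Or.inr hc)
    have key : ∀ w, Fpar (localComplement G v) w (symmDiff D {v})
        = Fpar G w D + chi G v w * (if w ∈ D then 1 else 0) := by
      intro w
      have hsd : Fpar (localComplement G v) w (symmDiff D {v})
          = Fpar (localComplement G v) w D + chi (localComplement G v) w v := by
        by_cases hv : v ∈ D
        · have hers : symmDiff D {v} = D.erase v := by
            ext x
            simp only [Finset.mem_symmDiff, Finset.mem_singleton, Finset.mem_erase]
            constructor
            · rintro (⟨h1, h2⟩ | ⟨h1, h2⟩)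
              · exact ⟨h2, h1⟩
              · exact absurd (h1 ▸ hv) h2
            · rintro ⟨h1, h2⟩; exact Or.inl ⟨h2, h1⟩
          rw [hers]
          unfold Fpar
          rw [← Finset.sum_erase_add D _ hv, add_assoc, CharTwo.add_self_eq_zero, add_zero]
        · have hins : symmDiff D {v} = insert v D := by
            ext x
            simp only [Finset.mem_symmDiff, Finset.mem_singleton, Finset.mem_insert]
            constructor
            · rintro (⟨h1, h2⟩ | ⟨h1, h2⟩)
              · exact Or.inr h1
              · exact Or.inl h1
            · rintro (h1 | h1)
              · exact Or.inr ⟨h1, fun hxD => hv (h1 ▸ hxD)⟩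
              · exact Or.inl ⟨h1, fun e => hv (e ▸ h1)⟩
          rw [hins]
          unfold Fpar
          rw [Finset.sum_insert hv, add_comm]
      have h2 : ∀ a b c : ZMod 2, b + (a + c) + a = b + c := by decide
      rw [hsd, Fpar_lc, hc, chi_lc_right, chi_symm G w v, mul_add, mul_one]
      exact h2 _ _ _
    refine ⟨symmDiff D {v}, ?_, ?_, fun w => ?_⟩
    · by_cases hv : v ∈ D
      · have hx : ∃ x ∈ D, G.Adj v x := by
          by_contra hx
          push_neg at hx
          have : Fpar G v D = 0 := Finset.sum_eq_zero fun x hxD => by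
            simp [chi, hx x hxD]
          rw [this] at hc
          exact absurd hc (by decide)
        obtain ⟨x, hxD, hadj⟩ := hx
        exact ⟨x, Finset.mem_symmDiff.mpr (Or.inl ⟨hxD, by
          simp only [Finset.mem_singleton]
          exact fun e => G.irrefl (e ▸ hadj)⟩)⟩
      · exact ⟨v, Finset.mem_symmDiff.mpr (Or.inr ⟨Finset.mem_singleton_self v, hv⟩)⟩
    · intro x hx
      rcases Finset.mem_symmDiff.mp hx with ⟨h1, _⟩ | ⟨h1, _⟩
      · exact hDL h1
      · exact (Finset.mem_singleton.mp h1) ▸ hvL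
    · rw [key w]
      by_cases hwv : w = v
      · subst hwv
        by_cases hw : w ∈ D
        · rw [chi_self, zero_mul, add_zero, hc]
          simp [hDL hw]
        · simp [hvL, Finset.mem_symmDiff, hw]
      · by_cases hw : w ∈ D
        · have : w ∈ symmDiff D {v} :=
            Finset.mem_symmDiff.mpr (Or.inl ⟨hw, by simp [hwv]⟩)
          simp [hDL hw, this]
        · rw [if_neg hw, mul_zero, add_zero]
          have hnot : w ∉ symmDiff D {v} := fun hmem => by
            rcases Finset.mem_symmDiff.mp hmem with ⟨h1, _⟩ | ⟨h1, _⟩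
            · exact hw h1
            · exact hwv (Finset.mem_singleton.mp h1)
          simp only [hnot, false_or]
          simpa [hw] using hiff w

lemma IsLoc_foldl (G : SimpleGraph V) (L : Finset V) (l : List V) (h : IsLoc G L) :
    IsLoc (List.foldl localComplement G l) L := by
  induction l generalizing G with
  | nil => exact h
  | cons a t ih => exact ih _ (IsLoc_lc G a L h)

lemma foldl_reverse_cancel (G : SimpleGraph V) (l : List V) :
    List.foldl localComplement G (l ++ l.reverse) = G := by
  induction l generalizing G with
  | nil => rfl
  | cons a t ih =>
      simp only [List.cons_append, List.foldl_cons, List.reverse_cons]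
      rw [← List.append_assoc, List.foldl_append, ih (localComplement G a)]
      simp [localComplement_invol]


end Aux

/-- If a graph `G` is `k`-vertex-minor universal then `k < δ_loc(G) + 2`. -/
theorem stmt_15 {V : Type*} [Fintype V] [Nonempty V] (G : SimpleGraph V) (k : ℕ)
    (hk : k ≤ Fintype.card V) (h : IsVertexMinorUniversal G k) :
    k < localMinDegree G + 2 := by
  classical
  by_contra hlt
  push_neg at hlt
  -- hlt : localMinDegree G + 2 ≤ k
  have hSne : {d : ℕ | ∃ (l : List V) (v : V),
      ((List.foldl localComplement G l).neighborSet v).ncard = d}.Nonempty :=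
    ⟨_, [], Classical.arbitrary V, rfl⟩
  have hmem := Nat.sInf_mem hSne
  obtain ⟨l, v, hv⟩ := hmem
  set δ := localMinDegree G with hδ
  have hvδ : ((List.foldl localComplement G l).neighborSet v).ncard = δ := hv
  set G₁ := List.foldl localComplement G l with hG₁
  -- the finset of neighbors
  have hfin : (G₁.neighborSet v).Finite := Set.toFinite _
  set N : Finset V := hfin.toFinset with hN
  have hNcard : N.card = δ := by
    rw [← hvδ, Set.ncard_eq_toFinset_card _ hfin]
  have hmemN : ∀ x, x ∈ N ↔ G₁.Adj v x := by
    intro x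
    rw [hN, Set.Finite.mem_toFinset, SimpleGraph.mem_neighborSet]
  set L : Finset V := insert v N with hL
  have hvN : v ∉ N := fun hmem => G₁.irrefl ((hmemN v).mp hmem)
  have hLcard : L.card = δ + 1 := by
    rw [hL, Finset.card_insert_of_notMem hvN, hNcard]
  have hvL : v ∈ L := Finset.mem_insert_self v N
  -- L is a local set of G₁ with witness {v}
  have hloc1 : IsLoc G₁ L := by
    refine ⟨{v}, ⟨v, Finset.mem_singleton_self v⟩, by simp [hL], fun w => ?_⟩
    have : Fpar G₁ w {v} = chi G₁ w v := Finset.sum_singleton _ _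
    rw [this]
    constructor
    · intro hw
      rcases Finset.mem_insert.mp hw with hw | hw
      · exact Or.inl (by simp [hw])
      · exact Or.inr (by simp [chi, G₁.adj_comm, (hmemN w).mp hw])
    · rintro (hw | hw)
      · rw [Finset.mem_singleton.mp hw]; exact hvL
      · have : G₁.Adj w v := by
          by_contra hadj
          rw [chi, if_neg hadj] at hw
          exact absurd hw (by decide)
        exact Finset.mem_insert_of_mem ((hmemN w).mpr (G₁.adj_symm this))
  -- find u outside L
  have hcard2 : δ + 2 ≤ k := hlt
  obtain ⟨u, hu⟩ : ∃ u, u ∉ L := by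
    by_contra h'
    push_neg at h'
    have hsub : (Finset.univ : Finset V) ⊆ L := fun x _ => h' x
    have := Finset.card_le_card hsub
    rw [Finset.card_univ, hLcard] at this
    omega
  have hvu : v ≠ u := fun e => hu (e ▸ hvL)
  -- build W of size k containing insert u L
  have hcardiuL : (insert u L).card = δ + 2 := by
    rw [Finset.card_insert_of_notMem hu, hLcard]
  obtain ⟨W, hsubW, _, hWcard⟩ :=
    Finset.exists_subsuperset_card_eq (n := k) (Finset.subset_univ (insert u L))
      (by rw [hcardiuL]; exact hcard2) (by rwa [Finset.card_univ])
  have hLW : L ⊆ W := fun x hx => hsubW (Finset.mem_insert_of_mem hx)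
  have huW : u ∈ W := hsubW (Finset.mem_insert_self u L)
  -- target graph: single edge v-u
  set H : SimpleGraph V := SimpleGraph.fromEdgeSet {s(v, u)} with hH
  have hHadj : ∀ a b, H.Adj a b ↔ ((a = v ∧ b = u) ∨ (a = u ∧ b = v)) := by
    intro a b
    rw [hH, SimpleGraph.fromEdgeSet_adj, Set.mem_singleton_iff, Sym2.eq_iff]
    constructor
    · exact fun hab => hab.1
    · rintro (⟨h1, h2⟩ | ⟨h1, h2⟩)
      · exact ⟨Or.inl ⟨h1, h2⟩, by rw [h1, h2]; exact hvu⟩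
      · exact ⟨Or.inr ⟨h1, h2⟩, by rw [h1, h2]; exact hvu.symm⟩
  have hHW : ∀ a b, H.Adj a b → a ∈ W ∧ b ∈ W := by
    intro a b hab
    rcases (hHadj a b).mp hab with ⟨h1, h2⟩ | ⟨h1, h2⟩
    · exact ⟨h1 ▸ hLW hvL, h2 ▸ huW⟩
    · exact ⟨h1 ▸ huW, h2 ▸ hLW hvL⟩
  obtain ⟨l', hl'⟩ := h W hWcard H hHW
  set G₂ := List.foldl localComplement G l' with hG₂
  -- G₂ is obtained from G₁ by local complementations
  have h3 : List.foldl localComplement G₁ l.reverse = G := by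
    rw [hG₁, ← List.foldl_append, foldl_reverse_cancel]
  have hG₂eq : G₂ = List.foldl localComplement G₁ (l.reverse ++ l') := by
    rw [List.foldl_append, h3]
  have hloc2 : IsLoc G₂ L := hG₂eq ▸ IsLoc_foldl G₁ L (l.reverse ++ l') hloc1
  obtain ⟨D, hDne, hDL, hiff⟩ := hloc2
  -- Step A : L ⊆ D
  have hDeq : D = L := by
    refine Finset.Subset.antisymm hDL (fun a ha => ?_)
    have hzero : Fpar G₂ a D = 0 := by
      refine Finset.sum_eq_zero fun x hx => ?_
      have hxW : x ∈ W := hLW (hDL hx)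
      have haW : a ∈ W := hLW ha
      have : ¬ H.Adj a x := by
        intro hadj
        rcases (hHadj a x).mp hadj with ⟨_, h2⟩ | ⟨h1, _⟩
        · exact hu (h2 ▸ hDL hx)
        · exact hu (h1 ▸ ha)
      have : ¬ G₂.Adj a x := fun hadj => this ((hl' a haW x hxW).mp hadj)
      simp [chi, this]
    rcases (hiff a).mp ha with hD | hone
    · exact hD
    · rw [hzero] at hone
      exact absurd hone (by decide)
  -- Step B : contradiction at u
  have hunot := (hiff u)
  have huL : u ∉ L := hu
  have huD : ¬ (u ∈ D ∨ Fpar G₂ u D = 1) := fun hc => huL ((hiff u).mpr hc)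
  apply huD
  right
  rw [hDeq]
  have : ∀ x ∈ L, chi G₂ u x = if x = v then 1 else 0 := by
    intro x hx
    have hxW : x ∈ W := hLW hx
    have hadj : G₂.Adj u x ↔ H.Adj u x := hl' u huW x hxW
    by_cases hxv : x = v
    · subst hxv
      have : H.Adj u x := (hHadj u x).mpr (Or.inr ⟨rfl, rfl⟩)
      simp [chi, hadj.mpr this]
    · have : ¬ H.Adj u x := by
        intro hc
        rcases (hHadj u x).mp hc with ⟨h1, _⟩ | ⟨_, h2⟩
        · exact hu (h1 ▸ hvL)
        · exact hxv h2
      have : ¬ G₂.Adj u x := fun hc => this (hadj.mp hc)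
      simp [chi, this, hxv]
  calc Fpar G₂ u L = ∑ x ∈ L, if x = v then (1 : ZMod 2) else 0 :=
        Finset.sum_congr rfl this
    _ = 1 := by rw [Finset.sum_ite_eq' L v (fun _ => (1 : ZMod 2)), if_pos hvL]
end
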